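/- (Nathanson) Let n ≥ 1 and let K ⊆ ℝⁿ be a compact set such that for every x ∈ ℝⁿ there exists y ∈ K with x - y ∈ ℤⁿ. Then the set A := (K - K) ∩ ℤⁿ is finite and generates the additive group ℤⁿ, i.e., the subgroup of ℤⁿ generated by A is all of ℤⁿ. -/
import Mathlib


open Pointwise

namespace Stmt7Aux

variable {n : ℕ}

/-- coercion from integer vectors to real vectors -/
def c (z : Fin n → ℤ) : Fin n → ℝ := fun i => (z i : ℝ)

/-- the integer lattice as a set -/
def L (n : ℕ) : Set (Fin n → ℝ) := {v | ∀ i, ∃ m : ℤ, v i = (m : ℝ)}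

lemma mem_L_iff {v : Fin n → ℝ} : v ∈ L n ↔ ∃ z : Fin n → ℤ, v = c z := by
  constructor
  · intro h
    choose z hz using h
    exact ⟨z, funext hz⟩
  · rintro ⟨z, rfl⟩ i; exact ⟨z i, rfl⟩

lemma c_sub (z z' : Fin n → ℤ) : c (z - z') = c z - c z' := by
  funext i; simp [c]

/-- lattice points in a bounded set form a finite set -/
lemma finite_bounded_lattice {B : Set (Fin n → ℝ)} (hB : Bornology.IsBounded B) :
    (B ∩ L n).Finite := by
  obtain ⟨R, hR⟩ := hB.subset_closedBall 0
  have : B ∩ L n ⊆ c '' (Set.Icc (fun _ => -⌈R⌉) (fun _ => ⌈R⌉)) := by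
    rintro v ⟨hvB, hvL⟩
    obtain ⟨z, rfl⟩ := mem_L_iff.mp hvL
    refine ⟨z, ?_, rfl⟩
    have hnorm : ‖c z‖ ≤ R := by
      have := hR hvB
      simpa [Metric.mem_closedBall, dist_zero_right] using this
    have hz : ∀ i, |z i| ≤ ⌈R⌉ := by
      intro i
      have h1 : ‖(c z) i‖ ≤ ‖c z‖ := norm_le_pi_norm (c z) i
      have h2 : ((|z i| : ℤ) : ℝ) ≤ R := by
        calc ((|z i| : ℤ) : ℝ) = |((z i : ℤ) : ℝ)| := by push_cast; ring
          _ = ‖(c z) i‖ := by simp [c, Real.norm_eq_abs]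
          _ ≤ ‖c z‖ := h1
          _ ≤ R := hnorm
      have h3 : ((|z i| : ℤ) : ℝ) ≤ (⌈R⌉ : ℝ) := h2.trans (Int.le_ceil R)
      exact_mod_cast h3
    constructor <;> intro i
    · exact neg_le_of_abs_le (hz i)
    · exact le_of_abs_le (hz i)
  exact Set.Finite.subset (Set.Finite.image _ (Set.finite_Icc _ _)) this

/-- there is a positive `ε` such that every lattice point within `ε` of `K - K`
is actually in `K - K`. -/
lemma exists_eps {K : Set (Fin n → ℝ)} (hK : IsCompact K) (hne : (K - K).Nonempty) :
    ∃ ε > (0 : ℝ), ∀ v ∈ L n, (∃ w ∈ K - K, dist v w ≤ ε) → v ∈ K - K := by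
  have hKK : IsCompact (K - K) := by
    rw [sub_eq_add_neg]; exact hK.add hK.neg
  have hclosed : IsClosed (K - K) := hKK.isClosed
  set F : Set (Fin n → ℝ) :=
    (((K - K) + Metric.closedBall 0 1) ∩ L n) \ (K - K) with hF
  have hFfin : F.Finite := by
    apply Set.Finite.subset (finite_bounded_lattice
      (Bornology.IsBounded.add hKK.isBounded Metric.isBounded_closedBall))
    intro v hv; exact hv.1
  have hFd : ∀ v ∈ F, 0 < Metric.infDist v (K - K) := by
    intro v hv
    exact (hclosed.notMem_iff_infDist_pos hne).mp hv.2
  by_cases hFne : F.Nonempty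
  · obtain ⟨v₀, hv₀, hmin⟩ := Set.exists_min_image F (fun v => Metric.infDist v (K - K))
      hFfin hFne
    set d := Metric.infDist v₀ (K - K) with hd
    have hdpos : 0 < d := hFd v₀ hv₀
    refine ⟨min 1 (d / 2), by positivity, ?_⟩
    rintro v hvL ⟨w, hw, hdist⟩
    by_contra hvnot
    have hvF : v ∈ F := by
      refine ⟨⟨?_, hvL⟩, hvnot⟩
      refine ⟨w, hw, v - w, ?_, by module⟩
      simp only [Metric.mem_closedBall, dist_zero_right]
      calc ‖v - w‖ = dist v w := (dist_eq_norm v w).symm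
        _ ≤ min 1 (d / 2) := hdist
        _ ≤ 1 := min_le_left _ _
    have h1 : d ≤ Metric.infDist v (K - K) := hmin v hvF
    have h2 : Metric.infDist v (K - K) ≤ dist v w := Metric.infDist_le_dist_of_mem hw
    have h3 : dist v w ≤ d / 2 := hdist.trans (min_le_right _ _)
    linarith
  · refine ⟨1, one_pos, ?_⟩
    rintro v hvL ⟨w, hw, hdist⟩
    by_contra hvnot
    apply hFne
    refine ⟨v, ⟨?_, hvL⟩, hvnot⟩
    refine ⟨w, hw, v - w, ?_, by module⟩
    simp only [Metric.mem_closedBall, dist_zero_right]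
    calc ‖v - w‖ = dist v w := (dist_eq_norm v w).symm
      _ ≤ 1 := hdist

/-- the integer lattice as an additive subgroup -/
def latticeSubgroup (n : ℕ) : AddSubgroup (Fin n → ℝ) where
  carrier := L n
  zero_mem' := fun i => ⟨0, by simp⟩
  add_mem' := by
    rintro a b ha hb i
    obtain ⟨p, hp⟩ := ha i
    obtain ⟨q, hq⟩ := hb i
    exact ⟨p + q, by simp [Pi.add_apply, hp, hq]⟩
  neg_mem' := by
    rintro a ha i
    obtain ⟨p, hp⟩ := ha i
    exact ⟨-p, by simp [Pi.neg_apply, hp]⟩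

end Stmt7Aux

open Stmt7Aux

/-- (Nathanson) Let `K ⊆ ℝⁿ` be a compact set such that every `x ∈ ℝⁿ` is congruent modulo
`ℤⁿ` to some `y ∈ K`. Then `A := (K - K) ∩ ℤⁿ` is finite and generates the additive
group `ℤⁿ`. -/
theorem stmt_7 (n : ℕ) (hn : 1 ≤ n) (K : Set (Fin n → ℝ)) (hK : IsCompact K)
    (hcover : ∀ x : Fin n → ℝ, ∃ y ∈ K, ∀ i, ∃ m : ℤ, x i - y i = (m : ℝ)) :
    ((K - K) ∩ {v : Fin n → ℝ | ∀ i, ∃ m : ℤ, v i = (m : ℝ)}).Finite ∧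
      (AddSubgroup.closure ((K - K) ∩ {v : Fin n → ℝ | ∀ i, ∃ m : ℤ, v i = (m : ℝ)}) :
          Set (Fin n → ℝ)) =
        {v : Fin n → ℝ | ∀ i, ∃ m : ℤ, v i = (m : ℝ)} := by
  have hLset : {v : Fin n → ℝ | ∀ i, ∃ m : ℤ, v i = (m : ℝ)} = L n := rfl
  set A : Set (Fin n → ℝ) := (K - K) ∩ L n with hA
  -- K is nonempty
  have hKne : K.Nonempty := by
    obtain ⟨y, hy, -⟩ := hcover 0
    exact ⟨y, hy⟩
  have hKKne : (K - K).Nonempty := by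
    obtain ⟨y, hy⟩ := hKne
    exact ⟨y - y, y, hy, y, hy, rfl⟩
  have hKK : IsCompact (K - K) := by
    rw [sub_eq_add_neg]; exact hK.add hK.neg
  -- finiteness
  have hfin : A.Finite := finite_bounded_lattice hKK.isBounded
  refine ⟨by rw [hLset]; exact hfin, ?_⟩
  -- the subgroup generated by A
  set H : AddSubgroup (Fin n → ℝ) := AddSubgroup.closure A with hH
  have hAH : A ⊆ (H : Set (Fin n → ℝ)) := AddSubgroup.subset_closure
  -- epsilon
  obtain ⟨ε, hεpos, hε⟩ := exists_eps hK hKKne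
  -- cover with explicit integer vectors
  have cover' : ∀ x : Fin n → ℝ, ∃ z : Fin n → ℤ, ∃ y ∈ K, x = c z + y := by
    intro x
    obtain ⟨y, hy, hxy⟩ := hcover x
    choose z hz using hxy
    refine ⟨z, y, hy, funext fun i => ?_⟩
    have := hz i
    simp only [Pi.add_apply, c]
    linarith
  -- the key step: close points have representatives differing by an element of H
  have hstep : ∀ (x x' : Fin n → ℝ) (z z' : Fin n → ℤ) (y y' : Fin n → ℝ),
      y ∈ K → y' ∈ K → x = c z + y → x' = c z' + y' → dist x x' ≤ ε →
      c z - c z' ∈ H := by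
    intro x x' z z' y y' hy hy' hx hx' hdist
    have hvL : c z - c z' ∈ L n := by
      rw [← c_sub]; exact mem_L_iff.mpr ⟨z - z', rfl⟩
    have hw : y' - y ∈ K - K := ⟨y', hy', y, hy, rfl⟩
    have hkey : c z - c z' ∈ K - K := by
      apply hε _ hvL
      refine ⟨y' - y, hw, ?_⟩
      have heq : (c z - c z') - (y' - y) = x - x' := by
        rw [hx, hx']; abel
      calc dist (c z - c z') (y' - y) = ‖(c z - c z') - (y' - y)‖ := dist_eq_norm _ _
        _ = ‖x - x'‖ := by rw [heq]
        _ = dist x x' := (dist_eq_norm x x').symm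
        _ ≤ ε := hdist
    exact hAH ⟨hkey, hvL⟩
  -- the two open pieces
  set W₁ : Set (Fin n → ℝ) :=
    {x | ∃ z : Fin n → ℤ, (∃ y ∈ K, x = c z + y) ∧ c z ∈ H} with hW₁
  set W₂ : Set (Fin n → ℝ) :=
    {x | ∃ z : Fin n → ℤ, (∃ y ∈ K, x = c z + y) ∧ c z ∉ H} with hW₂
  have hopen : ∀ (P : (Fin n → ℝ) → Prop),
      (∀ u v : Fin n → ℝ, u - v ∈ H → (P u ↔ P v)) →
      IsOpen {x | ∃ z : Fin n → ℤ, (∃ y ∈ K, x = c z + y) ∧ P (c z)} := by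
    intro P hP
    rw [Metric.isOpen_iff]
    rintro x ⟨z, ⟨y, hy, hxz⟩, hPz⟩
    refine ⟨ε, hεpos, ?_⟩
    intro x' hx'
    obtain ⟨z', y', hy', hxz'⟩ := cover' x'
    have hd : dist x x' ≤ ε := by
      rw [dist_comm]; exact le_of_lt hx'
    have hmem : c z - c z' ∈ H := hstep x x' z z' y y' hy hy' hxz hxz' hd
    exact ⟨z', ⟨y', hy', hxz'⟩, (hP (c z) (c z') hmem).mp hPz⟩
  have hopen₁ : IsOpen W₁ := by
    rw [hW₁]
    refine hopen (fun u => u ∈ H) ?_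
    intro u v huv
    constructor
    · intro hu
      have := H.sub_mem hu huv
      simpa using this
    · intro hv
      have := H.add_mem huv hv
      simpa using this
  have hopen₂ : IsOpen W₂ := by
    rw [hW₂]
    refine hopen (fun u => u ∉ H) ?_
    intro u v huv
    constructor
    · intro hu hv
      exact hu (by simpa using H.add_mem huv hv)
    · intro hv hu
      exact hv (by simpa using H.sub_mem hu huv)
  -- they cover everything
  have hcov : (Set.univ : Set (Fin n → ℝ)) ⊆ W₁ ∪ W₂ := by
    rintro x -
    obtain ⟨z, y, hy, hxz⟩ := cover' x
    by_cases h : c z ∈ H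
    · exact Or.inl ⟨z, ⟨y, hy, hxz⟩, h⟩
    · exact Or.inr ⟨z, ⟨y, hy, hxz⟩, h⟩
  -- they are disjoint
  have hdisj : W₁ ∩ W₂ = ∅ := by
    rw [Set.eq_empty_iff_forall_notMem]
    rintro x ⟨⟨z, ⟨y, hy, hxz⟩, hz⟩, ⟨z', ⟨y', hy', hxz'⟩, hz'⟩⟩
    apply hz'
    have hmem : c z - c z' ∈ H :=
      hstep x x z z' y y' hy hy' hxz hxz' (by rw [dist_self]; exact le_of_lt hεpos)
    have := H.sub_mem hz hmem
    simpa using this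
  -- W₁ is nonempty (0 ∈ H via z = 0)
  have hW₁ne : (Set.univ ∩ W₁).Nonempty := by
    obtain ⟨y, hy⟩ := hKne
    refine ⟨y, Set.mem_univ y, 0, ⟨y, hy, ?_⟩, ?_⟩
    · funext i; simp [c]
    · have : c (0 : Fin n → ℤ) = (0 : Fin n → ℝ) := by funext i; simp [c]
      rw [this]; exact H.zero_mem
  -- connectedness forces W₂ = ∅
  have hW₂empty : W₂ = ∅ := by
    by_contra h
    obtain ⟨x, hx⟩ := Set.nonempty_iff_ne_empty.mpr h
    have := isPreconnected_univ (α := Fin n → ℝ) W₁ W₂ hopen₁ hopen₂ hcov hW₁ne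
      ⟨x, Set.mem_univ x, hx⟩
    obtain ⟨p, -, hp⟩ := this
    rw [hdisj] at hp
    exact hp
  -- every lattice point is in H
  have hall : ∀ z : Fin n → ℤ, c z ∈ H := by
    intro z
    obtain ⟨y, hy⟩ := hKne
    have hx : c z + y ∈ W₁ ∪ W₂ := hcov (Set.mem_univ _)
    have hx₁ : c z + y ∈ W₁ := by
      rcases hx with h | h
      · exact h
      · rw [hW₂empty] at h; exact absurd h (Set.notMem_empty _)
    obtain ⟨z₁, ⟨y₁, hy₁, hxz₁⟩, hz₁⟩ := hx₁
    have hmem : c z - c z₁ ∈ H :=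
      hstep (c z + y) (c z + y) z z₁ y y₁ hy hy₁ rfl hxz₁
        (by rw [dist_self]; exact le_of_lt hεpos)
    have := H.add_mem hmem hz₁
    simpa using this
  -- conclude the set equality
  rw [hLset]
  apply Set.Subset.antisymm
  · have hle : H ≤ latticeSubgroup n := by
      rw [hH]
      apply AddSubgroup.closure_le (latticeSubgroup n) |>.mpr
      intro v hv
      exact hv.2
    intro v hv
    exact hle hv
  · intro v hv
    obtain ⟨z, rfl⟩ := mem_L_iff.mp hv
    exact hall z
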